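/- Let p₁, p₂, p₃, w₁₂, w₂₃, w₁₃ ∈ [0,1] satisfy, for each pair (ij) ∈ {(12),(23),(13)}, the consistency constraints |p_i − p_j| ≤ w_{ij} ≤ min(p_i + p_j, 2 − p_i − p_j). Then there exists a probability distribution p on {0,1}³ such that for each i ∈ {1,2,3} the marginal satisfies P(X_i = 0) = p_i and for each pair (ij) the marginal satisfies P(X_i ≠ X_j) = w_{ij}, if and only if the four Kochen–Specker inequalities hold: w₁₂ + w₂₃ + w₁₃ ≤ 2, w₁₂ ≤ w₂₃ + w₁₃, w₂₃ ≤ w₁₂ + w₁₃, and w₁₃ ≤ w₁₂ + w₂₃. -/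
import Mathlib


open scoped BigOperators

lemma sum_fin3bool (g : (Fin 3 → Bool) → ℝ) :
    ∑ f, g f =
      g ![false,false,false] + g ![false,false,true] + g ![false,true,false] +
      g ![false,true,true] + g ![true,false,false] + g ![true,false,true] +
      g ![true,true,false] + g ![true,true,true] := by
  have h : (Finset.univ : Finset (Fin 3 → Bool)) =
      {![false,false,false], ![false,false,true], ![false,true,false], ![false,true,true],
       ![true,false,false], ![true,false,true], ![true,true,false], ![true,true,true]} := by
    decide
  rw [h]
  rw [Finset.sum_insert (by decide), Finset.sum_insert (by decide),
      Finset.sum_insert (by decide), Finset.sum_insert (by decide),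
      Finset.sum_insert (by decide), Finset.sum_insert (by decide),
      Finset.sum_insert (by decide), Finset.sum_singleton]
  ring

/-- **The KS-noncontextuality polytope of Specker's scenario.** Given marginal probabilities
`p₁, p₂, p₃` and anticorrelation probabilities `w₁₂, w₂₃, w₁₃` in `[0,1]` satisfying the
consistency constraints `|p_i − p_j| ≤ w_{ij} ≤ min(p_i + p_j, 2 − p_i − p_j)`, a global joint
distribution on `{0,1}³` reproducing them exists iff the four Kochen–Specker inequalities
hold. (Outcome `0` of measurement `i` is encoded by `f i = false`.) -/
theorem specker_KS_polytope_characterization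
    (p₁ p₂ p₃ w₁₂ w₂₃ w₁₃ : ℝ)
    (hp₁ : p₁ ∈ Set.Icc (0 : ℝ) 1) (hp₂ : p₂ ∈ Set.Icc (0 : ℝ) 1)
    (hp₃ : p₃ ∈ Set.Icc (0 : ℝ) 1)
    (hw₁₂ : w₁₂ ∈ Set.Icc (0 : ℝ) 1) (hw₂₃ : w₂₃ ∈ Set.Icc (0 : ℝ) 1)
    (hw₁₃ : w₁₃ ∈ Set.Icc (0 : ℝ) 1)
    (hc₁₂ : |p₁ - p₂| ≤ w₁₂ ∧ w₁₂ ≤ min (p₁ + p₂) (2 - p₁ - p₂))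
    (hc₂₃ : |p₂ - p₃| ≤ w₂₃ ∧ w₂₃ ≤ min (p₂ + p₃) (2 - p₂ - p₃))
    (hc₁₃ : |p₁ - p₃| ≤ w₁₃ ∧ w₁₃ ≤ min (p₁ + p₃) (2 - p₁ - p₃)) :
    (∃ q : (Fin 3 → Bool) → ℝ,
        (∀ f, 0 ≤ q f) ∧ (∑ f, q f = 1) ∧
        (∑ f ∈ Finset.univ.filter (fun f : Fin 3 → Bool => f 0 = false), q f) = p₁ ∧
        (∑ f ∈ Finset.univ.filter (fun f : Fin 3 → Bool => f 1 = false), q f) = p₂ ∧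
        (∑ f ∈ Finset.univ.filter (fun f : Fin 3 → Bool => f 2 = false), q f) = p₃ ∧
        (∑ f ∈ Finset.univ.filter (fun f : Fin 3 → Bool => f 0 ≠ f 1), q f) = w₁₂ ∧
        (∑ f ∈ Finset.univ.filter (fun f : Fin 3 → Bool => f 1 ≠ f 2), q f) = w₂₃ ∧
        (∑ f ∈ Finset.univ.filter (fun f : Fin 3 → Bool => f 0 ≠ f 2), q f) = w₁₃) ↔
      (w₁₂ + w₂₃ + w₁₃ ≤ 2 ∧ w₁₂ ≤ w₂₃ + w₁₃ ∧ w₂₃ ≤ w₁₂ + w₁₃ ∧ w₁₃ ≤ w₁₂ + w₂₃) := by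
  obtain ⟨h12a, h12b⟩ := abs_le.mp hc₁₂.1
  obtain ⟨h23a, h23b⟩ := abs_le.mp hc₂₃.1
  obtain ⟨h13a, h13b⟩ := abs_le.mp hc₁₃.1
  obtain ⟨h12c, h12d⟩ := le_min_iff.mp hc₁₂.2
  obtain ⟨h23c, h23d⟩ := le_min_iff.mp hc₂₃.2
  obtain ⟨h13c, h13d⟩ := le_min_iff.mp hc₁₃.2
  constructor
  · rintro ⟨q, hq0, hqs, hq1, hq2, hq3, hv12, hv23, hv13⟩
    have e000 := hq0 ![false,false,false]
    have e001 := hq0 ![false,false,true]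
    have e010 := hq0 ![false,true,false]
    have e011 := hq0 ![false,true,true]
    have e100 := hq0 ![true,false,false]
    have e101 := hq0 ![true,false,true]
    have e110 := hq0 ![true,true,false]
    have e111 := hq0 ![true,true,true]
    rw [Finset.sum_filter] at hq1 hq2 hq3 hv12 hv23 hv13
    rw [sum_fin3bool] at hqs hq1 hq2 hq3 hv12 hv23 hv13
    norm_num [Matrix.cons_val_zero, Matrix.cons_val_one, Matrix.head_cons,
      Matrix.cons_val_two, Matrix.tail_cons] at hq1 hq2 hq3 hv12 hv23 hv13
    exact ⟨by linarith, by linarith, by linarith, by linarith⟩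
  · rintro ⟨hks1, hks2, hks3, hks4⟩
    set t : ℝ := max (max 0 ((2 - p₂ - p₃ - w₁₂ - w₁₃)/2))
        (max ((2 - p₁ - p₃ - w₁₂ - w₂₃)/2) ((2 - p₁ - p₂ - w₁₃ - w₂₃)/2)) with hT
    have ht0 : (0:ℝ) ≤ t := le_trans (le_max_left _ _) (le_max_left _ _)
    have htL1 : (2 - p₂ - p₃ - w₁₂ - w₁₃)/2 ≤ t :=
      le_trans (le_max_right _ _) (le_max_left _ _)
    have htL2 : (2 - p₁ - p₃ - w₁₂ - w₂₃)/2 ≤ t :=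
      le_trans (le_max_left _ _) (le_max_right _ _)
    have htL3 : (2 - p₁ - p₂ - w₁₃ - w₂₃)/2 ≤ t :=
      le_trans (le_max_right _ _) (le_max_right _ _)
    have htU12 : t ≤ (2 - p₁ - p₂ - w₁₂)/2 :=
      max_le (max_le (by linarith) (by linarith)) (max_le (by linarith) (by linarith))
    have htU13 : t ≤ (2 - p₁ - p₃ - w₁₃)/2 :=
      max_le (max_le (by linarith) (by linarith)) (max_le (by linarith) (by linarith))
    have htU23 : t ≤ (2 - p₂ - p₃ - w₂₃)/2 :=
      max_le (max_le (by linarith) (by linarith)) (max_le (by linarith) (by linarith))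
    have htU4 : t ≤ (2 - w₁₂ - w₂₃ - w₁₃)/2 :=
      max_le (max_le (by linarith) (by linarith)) (max_le (by linarith) (by linarith))
    clear hT
    refine ⟨fun f =>
      if f 0 then
        (if f 1 then (if f 2 then t else (2 - p₁ - p₂ - w₁₂)/2 - t)
         else (if f 2 then (2 - p₁ - p₃ - w₁₃)/2 - t
               else t - (2 - p₂ - p₃ - w₁₂ - w₁₃)/2))
      else
        (if f 1 then (if f 2 then (2 - p₂ - p₃ - w₂₃)/2 - t
                      else t - (2 - p₁ - p₃ - w₁₂ - w₂₃)/2)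
         else (if f 2 then t - (2 - p₁ - p₂ - w₁₃ - w₂₃)/2
               else (2 - w₁₂ - w₂₃ - w₁₃)/2 - t)), ?_, ?_, ?_, ?_, ?_, ?_, ?_, ?_⟩
    · intro f
      rcases Bool.eq_false_or_eq_true (f 0) with h0 | h0 <;>
      rcases Bool.eq_false_or_eq_true (f 1) with h1 | h1 <;>
      rcases Bool.eq_false_or_eq_true (f 2) with h2 | h2 <;>
      simp only [h0, h1, h2, if_true, if_false, Bool.false_eq_true] <;> linarith
    all_goals
      first
      | (rw [sum_fin3bool]
         norm_num [Matrix.cons_val_zero, Matrix.cons_val_one, Matrix.head_cons,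
           Matrix.cons_val_two, Matrix.tail_cons]
         ring)
      | (rw [Finset.sum_filter, sum_fin3bool]
         norm_num [Matrix.cons_val_zero, Matrix.cons_val_one, Matrix.head_cons,
           Matrix.cons_val_two, Matrix.tail_cons]
         ring)
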